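/- arXiv:2501.14428 — 7 statements merged into one kernel-verified Lean document; each statement's English description precedes it below -/
import Mathlib

section
/- Let S be a finite set and X = (X_s)_{s∈S} be a {0,1}-valued process such that P(X(I) ≡ 0) > 0 for all nonempty I ⊆ S. Then there is a unique signed measure ν on the nonempty subsets of S satisfying ν({A : A ∩ I ≠ ∅}) = -log P(X(I) ≡ 0) for all I ⊆ S, and it is given by ν(K) = Σ_{I ⊆ K} (-1)^{|K|-|I|} log P(X(S∖I) ≡ 0) for nonempty K ⊆ S. -/
open MeasureTheory Finset
open scoped Classical

lemma h1 {S : Type*} [DecidableEq S] (A : Finset S) :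
    ∑ I ∈ A.powerset, (-1:ℝ)^(A.card - I.card) = if A = ∅ then 1 else 0 := by
  have : ∀ I ∈ A.powerset, (-1:ℝ)^(A.card - I.card) = (-1)^A.card * (-1)^I.card := by
    intro I hI
    rw [Finset.mem_powerset] at hI
    have h := Finset.card_le_card hI
    have he : A.card + I.card = (A.card - I.card) + 2*I.card := by omega
    rw [← pow_add, he, pow_add, pow_mul]
    norm_num
  rw [Finset.sum_congr rfl this, ← Finset.mul_sum]
  have := Finset.sum_powerset_neg_one_pow_card (x := A)
  have hcast : (∑ m ∈ A.powerset, (-1:ℝ)^m.card) = if A = ∅ then 1 else 0 := by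
    have := congrArg (fun z : ℤ => (z : ℝ)) this
    push_cast at this
    simpa using this
  rw [hcast]
  by_cases h : A = ∅ <;> simp [h]

lemma h2 {S : Type*} [DecidableEq S] (K J : Finset S) (hJK : J ⊆ K) :
    ∑ I ∈ K.powerset.filter (fun I => J ⊆ I), (-1:ℝ)^(K.card - I.card)
      = if J = K then 1 else 0 := by
  have := h1 (K \ J)
  simp only [Finset.sdiff_eq_empty_iff_subset] at this
  have heq : (if K ⊆ J then (1:ℝ) else 0) = if J = K then 1 else 0 := by
    by_cases h : J = K
    · simp [h]
    · rw [if_neg h, if_neg]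
      intro hKJ
      exact h (Finset.Subset.antisymm hJK hKJ)
  rw [heq] at this
  rw [← this]
  apply Finset.sum_nbij' (fun I => I \ J) (fun D => D ∪ J)
  · intro I hI
    simp only [Finset.mem_filter, Finset.mem_powerset] at hI
    exact Finset.mem_powerset.2 (Finset.sdiff_subset_sdiff hI.1 le_rfl)
  · intro D hD
    rw [Finset.mem_powerset] at hD
    simp only [Finset.mem_filter, Finset.mem_powerset]
    constructor
    · exact Finset.union_subset (hD.trans (Finset.sdiff_subset)) hJK
    · exact Finset.subset_union_right
  · intro I hI
    simp only [Finset.mem_filter, Finset.mem_powerset] at hI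
    exact Finset.sdiff_union_of_subset hI.2
  · intro D hD
    rw [Finset.mem_powerset] at hD
    rw [Finset.union_sdiff_right]
    exact Finset.sdiff_eq_self_of_disjoint (Finset.disjoint_left.2 fun a ha hb => (Finset.mem_sdiff.1 (hD ha)).2 hb) |>.symm ▸ rfl
  · intro I hI
    simp only [Finset.mem_filter, Finset.mem_powerset] at hI
    congr 1
    have h1 : (I \ J).card = I.card - J.card := Finset.card_sdiff_of_subset hI.2
    have h2 : (K \ J).card = K.card - J.card := Finset.card_sdiff_of_subset hJK
    have := Finset.card_le_card hI.1
    have := Finset.card_le_card hI.2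
    omega

lemma key {S : Type*} [DecidableEq S] (g : Finset S → ℝ) (K : Finset S) :
    ∑ I ∈ K.powerset, (-1:ℝ)^(K.card - I.card) * (∑ J ∈ I.powerset, g J) = g K := by
  have swap : ∑ I ∈ K.powerset, ∑ J ∈ I.powerset, (-1:ℝ)^(K.card - I.card) * g J
      = ∑ J ∈ K.powerset, ∑ I ∈ K.powerset.filter (fun I => J ⊆ I),
          (-1:ℝ)^(K.card - I.card) * g J := by
    apply Finset.sum_comm'
    intro I J
    simp only [Finset.mem_powerset, Finset.mem_filter]
    constructor
    · rintro ⟨h1, h2⟩; exact ⟨⟨h1, h2⟩, h2.trans h1⟩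
    · rintro ⟨⟨h1, h2⟩, h3⟩; exact ⟨h1, h2⟩
  calc ∑ I ∈ K.powerset, (-1:ℝ)^(K.card - I.card) * (∑ J ∈ I.powerset, g J)
      = ∑ I ∈ K.powerset, ∑ J ∈ I.powerset, (-1:ℝ)^(K.card - I.card) * g J := by
        simp [Finset.mul_sum]
    _ = ∑ J ∈ K.powerset, ∑ I ∈ K.powerset.filter (fun I => J ⊆ I),
          (-1:ℝ)^(K.card - I.card) * g J := swap
    _ = ∑ J ∈ K.powerset, (if J = K then 1 else 0) * g J := by
        apply Finset.sum_congr rfl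
        intro J hJ
        rw [← Finset.sum_mul, h2 K J (Finset.mem_powerset.1 hJ)]
    _ = ∑ J ∈ K.powerset, (if J = K then g J else 0) := by
        apply Finset.sum_congr rfl
        intro J _
        by_cases h : J = K <;> simp [h]
    _ = g K := by
        rw [Finset.sum_ite_eq' K.powerset K g]
        simp

lemma h0r {S : Type*} [DecidableEq S] (A : Finset S) :
    ∑ m ∈ A.powerset, (-1:ℝ)^m.card = if A = ∅ then 1 else 0 := by
  have := Finset.sum_powerset_neg_one_pow_card (x := A)
  have := congrArg (fun z : ℤ => (z : ℝ)) this
  push_cast at this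
  simpa using this

lemma h2' {S : Type*} [DecidableEq S] (J I : Finset S) (hIJ : I ⊆ J) :
    ∑ K ∈ J.powerset.filter (fun K => I ⊆ K), (-1:ℝ)^(K.card - I.card)
      = if I = J then 1 else 0 := by
  have hcast := h0r (J \ I)
  have heq : (if J \ I = ∅ then (1:ℝ) else 0) = if I = J then 1 else 0 := by
    simp only [Finset.sdiff_eq_empty_iff_subset]
    by_cases h : I = J
    · simp [h]
    · rw [if_neg (fun hJI => h (Finset.Subset.antisymm hIJ hJI)), if_neg h]
  rw [heq] at hcast
  rw [← hcast]
  apply Finset.sum_nbij' (fun K => K \ I) (fun D => D ∪ I)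
  · intro K hK
    simp only [Finset.mem_filter, Finset.mem_powerset] at hK
    exact Finset.mem_powerset.2 (Finset.sdiff_subset_sdiff hK.1 le_rfl)
  · intro D hD
    rw [Finset.mem_powerset] at hD
    simp only [Finset.mem_filter, Finset.mem_powerset]
    exact ⟨Finset.union_subset (hD.trans Finset.sdiff_subset) hIJ, Finset.subset_union_right⟩
  · intro K hK
    simp only [Finset.mem_filter, Finset.mem_powerset] at hK
    exact Finset.sdiff_union_of_subset hK.2
  · intro D hD
    rw [Finset.mem_powerset] at hD
    rw [Finset.union_sdiff_right]
    exact (Finset.sdiff_eq_self_of_disjoint (Finset.disjoint_left.2 fun a ha hb => (Finset.mem_sdiff.1 (hD ha)).2 hb))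
  · intro K hK
    simp only [Finset.mem_filter, Finset.mem_powerset] at hK
    congr 1
    have := Finset.card_sdiff_of_subset hK.2
    have := Finset.card_le_card hK.1
    have := Finset.card_le_card hK.2
    omega

lemma keyA {S : Type*} [DecidableEq S] (g : Finset S → ℝ) (J : Finset S) :
    ∑ K ∈ J.powerset, ∑ I ∈ K.powerset, (-1:ℝ)^(K.card - I.card) * g I = g J := by
  have swap : ∑ K ∈ J.powerset, ∑ I ∈ K.powerset, (-1:ℝ)^(K.card - I.card) * g I
      = ∑ I ∈ J.powerset, ∑ K ∈ J.powerset.filter (fun K => I ⊆ K),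
          (-1:ℝ)^(K.card - I.card) * g I := by
    apply Finset.sum_comm'
    intro K I
    simp only [Finset.mem_powerset, Finset.mem_filter]
    constructor
    · rintro ⟨hh1, hh2⟩; exact ⟨⟨hh1, hh2⟩, hh2.trans hh1⟩
    · rintro ⟨⟨hh1, hh2⟩, _⟩; exact ⟨hh1, hh2⟩
  rw [swap]
  calc ∑ I ∈ J.powerset, ∑ K ∈ J.powerset.filter (fun K => I ⊆ K),
          (-1:ℝ)^(K.card - I.card) * g I
      = ∑ I ∈ J.powerset, (if I = J then 1 else 0) * g I := by
        apply Finset.sum_congr rfl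
        intro I hI
        rw [← Finset.sum_mul, h2' J I (Finset.mem_powerset.1 hI)]
    _ = ∑ I ∈ J.powerset, (if I = J then g I else 0) := by
        apply Finset.sum_congr rfl
        intro I _
        by_cases h : I = J <;> simp [h]
    _ = g J := by
        rw [Finset.sum_ite_eq' J.powerset J g]
        simp

/-- Möbius inversion: existence and uniqueness of the signed measure
corresponding to a `{0,1}`-valued process on a finite set, together with the
explicit formula. -/
theorem stmt0 {S : Type*} [Fintype S] [DecidableEq S]
    (μ : Measure (S → Bool)) [IsProbabilityMeasure μ]
    (P0 : Finset S → ℝ)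
    (hP0 : ∀ I : Finset S, P0 I = (μ {f | ∀ i ∈ I, f i = false}).toReal)
    (hpos : ∀ I : Finset S, I.Nonempty → 0 < P0 I) :
    (∃! ν : Finset S → ℝ, ν ∅ = 0 ∧
      ∀ I : Finset S,
        ∑ K ∈ Finset.univ.powerset.filter (fun K => (K ∩ I).Nonempty), ν K
          = - Real.log (P0 I)) ∧
    (∀ ν : Finset S → ℝ,
      (ν ∅ = 0 ∧ ∀ I : Finset S,
        ∑ K ∈ Finset.univ.powerset.filter (fun K => (K ∩ I).Nonempty), ν K
          = - Real.log (P0 I)) →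
      ∀ K : Finset S, K.Nonempty →
        ν K = ∑ I ∈ K.powerset, (-1 : ℝ) ^ (K.card - I.card) * Real.log (P0 Iᶜ)) := by
  -- P0 ∅ = 1
  have hP0empty : P0 ∅ = 1 := by
    rw [hP0]
    have : {f : S → Bool | ∀ i ∈ (∅ : Finset S), f i = false} = Set.univ := by
      ext f; simp
    rw [this, measure_univ]
    simp
  set L : Finset S → ℝ := fun I => Real.log (P0 Iᶜ) with hLdef
  have hLuniv : L Finset.univ = 0 := by
    simp only [hLdef, Finset.compl_univ, hP0empty, Real.log_one]
  -- the filter of non-intersecting sets is the powerset of the complement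
  have hfilt : ∀ I : Finset S,
      (Finset.univ.powerset.filter (fun K => ¬ (K ∩ I).Nonempty)) = Iᶜ.powerset := by
    intro I
    ext K
    simp only [Finset.mem_filter, Finset.mem_powerset, Finset.not_nonempty_iff_eq_empty,
      Finset.subset_univ, true_and]
    rw [← Finset.disjoint_iff_inter_eq_empty]
    constructor
    · intro h a ha
      simp only [Finset.mem_compl]
      exact Finset.disjoint_left.1 h ha
    · intro h
      exact Finset.disjoint_left.2 fun a ha hb => by exact absurd hb (by simpa using h ha)
  have hsplit : ∀ (ν : Finset S → ℝ) (I : Finset S),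
      ∑ K ∈ Finset.univ.powerset.filter (fun K => (K ∩ I).Nonempty), ν K
        + ∑ K ∈ Iᶜ.powerset, ν K
      = ∑ K ∈ (Finset.univ : Finset S).powerset, ν K := by
    intro ν I
    rw [← hfilt I]
    exact Finset.sum_filter_add_sum_filter_not _ _ _
  set f : Finset S → ℝ := fun K => ∑ I ∈ K.powerset, (-1:ℝ)^(K.card - I.card) * L I
    with hfdef
  set ν₀ : Finset S → ℝ := fun K => if K = ∅ then 0 else f K with hν₀def
  have hfempty : f ∅ = L ∅ := by simp [hfdef]
  have hsumf : ∀ J : Finset S, ∑ K ∈ J.powerset, f K = L J := fun J => keyA L J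
  have hsumν₀ : ∀ J : Finset S, ∑ K ∈ J.powerset, ν₀ K = L J - L ∅ := by
    intro J
    have hterm : ∀ K : Finset S, ν₀ K = f K - (if K = ∅ then f ∅ else 0) := by
      intro K
      by_cases h : K = ∅ <;> simp [hν₀def, h]
    calc ∑ K ∈ J.powerset, ν₀ K
        = ∑ K ∈ J.powerset, (f K - (if K = ∅ then f ∅ else 0)) := by
          exact Finset.sum_congr rfl fun K _ => hterm K
      _ = (∑ K ∈ J.powerset, f K) - ∑ K ∈ J.powerset, (if K = ∅ then f ∅ else 0) := by
          rw [Finset.sum_sub_distrib]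
      _ = L J - L ∅ := by
          rw [hsumf, Finset.sum_ite_eq' J.powerset ∅ (fun _ => f ∅)]
          simp [hfempty]
  have hcond₀ : ν₀ ∅ = 0 ∧ ∀ I : Finset S,
      ∑ K ∈ Finset.univ.powerset.filter (fun K => (K ∩ I).Nonempty), ν₀ K
        = - Real.log (P0 I) := by
    refine ⟨by simp [hν₀def], fun I => ?_⟩
    have h1 := hsplit ν₀ I
    rw [hsumν₀, hsumν₀, hLuniv] at h1
    have hLc : L Iᶜ = Real.log (P0 I) := by simp [hLdef, compl_compl]
    rw [hLc] at h1
    linarith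
  have huniq : ∀ ν : Finset S → ℝ,
      (ν ∅ = 0 ∧ ∀ I : Finset S,
        ∑ K ∈ Finset.univ.powerset.filter (fun K => (K ∩ I).Nonempty), ν K
          = - Real.log (P0 I)) →
      ∀ K : Finset S, K.Nonempty →
        ν K = ∑ I ∈ K.powerset, (-1 : ℝ) ^ (K.card - I.card) * Real.log (P0 Iᶜ) := by
    rintro ν ⟨hν0, hνI⟩ K hK
    set T : ℝ := ∑ K ∈ (Finset.univ : Finset S).powerset, ν K with hTdef
    have hG : ∀ J : Finset S, ∑ Kk ∈ J.powerset, ν Kk = T + L J := by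
      intro J
      have h1 := hsplit ν Jᶜ
      rw [compl_compl] at h1
      rw [hνI Jᶜ] at h1
      have : L J = Real.log (P0 Jᶜ) := rfl
      linarith [this]
    have hkey := key ν K
    have hre : ∑ I ∈ K.powerset, (-1:ℝ)^(K.card - I.card) * (∑ J ∈ I.powerset, ν J)
        = ∑ I ∈ K.powerset, (-1:ℝ)^(K.card - I.card) * (T + L I) := by
      exact Finset.sum_congr rfl fun I _ => by rw [hG]
    rw [hre] at hkey
    have hexp : ∑ I ∈ K.powerset, (-1:ℝ)^(K.card - I.card) * (T + L I)
        = T * (∑ I ∈ K.powerset, (-1:ℝ)^(K.card - I.card))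
          + ∑ I ∈ K.powerset, (-1:ℝ)^(K.card - I.card) * L I := by
      rw [Finset.mul_sum, ← Finset.sum_add_distrib]
      exact Finset.sum_congr rfl fun I _ => by ring
    rw [hexp, h1 K, if_neg (Finset.nonempty_iff_ne_empty.1 hK)] at hkey
    rw [← hkey]
    ring
  refine ⟨⟨ν₀, hcond₀, ?_⟩, huniq⟩
  intro ν' h'
  funext K
  by_cases hK : K = ∅
  · rw [hK, h'.1]
    simp [hν₀def]
  · rw [huniq ν' h' K (Finset.nonempty_iff_ne_empty.2 hK),
      huniq ν₀ hcond₀ K (Finset.nonempty_iff_ne_empty.2 hK)]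
end

section
/- Let S be a finite set, X a {0,1}-valued process on S with P(X(I) ≡ 0) > 0 for all nonempty I ⊆ S, and ν the unique signed measure corresponding to X via Möbius inversion. Let B ⊆ S, and define ν_B on subsets of B by ν_B(𝒜) = ν({A' ⊆ S : A' ∩ B ∈ 𝒜}). Then ν_B is the unique signed measure corresponding to the restricted process X|_B. -/
open MeasureTheory Finset
open scoped Classical

/-- the projection `ν_B(𝒜) = ν({A' : A' ∩ B ∈ 𝒜})` of the unique signed
measure corresponding to `X` is the unique signed measure corresponding to the
restricted process `X|_B`, i.e. it satisfies the defining (characterizing) identity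
for the void probabilities of `X|_B`. -/
theorem stmt1 {S : Type*} [Fintype S] [DecidableEq S]
    (μ : Measure (S → Bool)) [IsProbabilityMeasure μ]
    (P0 : Finset S → ℝ)
    (hP0 : ∀ I : Finset S, P0 I = (μ {f | ∀ i ∈ I, f i = false}).toReal)
    (hpos : ∀ I : Finset S, I.Nonempty → 0 < P0 I)
    (ν : Finset S → ℝ) (hν0 : ν ∅ = 0)
    (hν : ∀ I : Finset S,
      ∑ K ∈ Finset.univ.powerset.filter (fun K => (K ∩ I).Nonempty), ν K
        = - Real.log (P0 I))
    (B : Finset S) (νB : Finset S → ℝ)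
    (hνB : ∀ K : Finset S,
      νB K = ∑ A ∈ Finset.univ.powerset.filter (fun A => A ∩ B = K), ν A) :
    ∀ I : Finset S, I ⊆ B →
      ∑ K ∈ B.powerset.filter (fun K => (K ∩ I).Nonempty), νB K
        = - Real.log (P0 I) := by
  intro I hI
  rw [← hν I]
  simp only [hνB]
  rw [Finset.sum_fiberwise_eq_sum_filter _ _ (fun A => A ∩ B)]
  congr 1
  ext A
  simp only [Finset.mem_filter, Finset.mem_powerset, Finset.subset_univ, true_and]
  have key : A ∩ B ∩ I = A ∩ I := by
    rw [Finset.inter_assoc, Finset.inter_eq_right.mpr hI]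
  constructor
  · rintro ⟨-, h⟩
    rwa [key] at h
  · intro h
    exact ⟨Finset.inter_subset_right, by rwa [key]⟩
end

section
/- Let S be a finite set, X a {0,1}-valued process on S with P(X(I) ≡ 0) > 0 for all nonempty I, and ν the corresponding unique signed measure. Let B ⊆ S. Then the restriction of ν to the nonempty subsets of B is the unique signed measure corresponding to the conditioned process X given the event {X(B^c) ≡ 0}. -/
open MeasureTheory Finset
open scoped Classical

/-- the restriction of the unique signed measure `ν` of `X` to the
(nonempty) subsets of `B` is the unique signed measure corresponding to the
conditioned process `X | {X(Bᶜ) ≡ 0}`: it satisfies the defining void-probability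
identity of that conditioned process. -/
theorem stmt2 {S : Type*} [Fintype S] [DecidableEq S]
    (μ : Measure (S → Bool)) [IsProbabilityMeasure μ]
    (P0 : Finset S → ℝ)
    (hP0 : ∀ I : Finset S, P0 I = (μ {f | ∀ i ∈ I, f i = false}).toReal)
    (hpos : ∀ I : Finset S, I.Nonempty → 0 < P0 I)
    (ν : Finset S → ℝ) (hν0 : ν ∅ = 0)
    (hν : ∀ I : Finset S,
      ∑ K ∈ Finset.univ.powerset.filter (fun K => (K ∩ I).Nonempty), ν K
        = - Real.log (P0 I))
    (B : Finset S) :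
    ∀ I : Finset S, I ⊆ B →
      ∑ K ∈ B.powerset.filter (fun K => (K ∩ I).Nonempty), ν K
        = - Real.log (P0 (I ∪ Bᶜ) / P0 Bᶜ) := by
  intro I hI
  have hPempty : P0 ∅ = 1 := by
    rw [hP0]
    have : {f : S → Bool | ∀ i ∈ (∅ : Finset S), f i = false} = Set.univ := by
      ext f; simp
    rw [this]
    simp
  have hposall : ∀ J : Finset S, 0 < P0 J := by
    intro J
    rcases J.eq_empty_or_nonempty with h | h
    · rw [h, hPempty]; norm_num
    · exact hpos J h
  have ha := hposall (I ∪ Bᶜ)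
  have hb := hposall Bᶜ
  have h1 := hν (I ∪ Bᶜ)
  have h2 := hν Bᶜ
  have hsub : Finset.univ.powerset.filter (fun K => (K ∩ Bᶜ).Nonempty)
      ⊆ Finset.univ.powerset.filter (fun K => (K ∩ (I ∪ Bᶜ)).Nonempty) := by
    intro K hK
    simp only [Finset.mem_filter, Finset.mem_powerset] at hK ⊢
    exact ⟨hK.1, hK.2.mono (Finset.inter_subset_inter (Finset.Subset.refl K)
      Finset.subset_union_right)⟩
  have hset : Finset.univ.powerset.filter (fun K => (K ∩ (I ∪ Bᶜ)).Nonempty)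
      \ Finset.univ.powerset.filter (fun K => (K ∩ Bᶜ).Nonempty)
      = B.powerset.filter (fun K => (K ∩ I).Nonempty) := by
    ext K
    simp only [Finset.mem_sdiff, Finset.mem_filter, Finset.mem_powerset,
      Finset.subset_univ, true_and, Finset.Nonempty, Finset.mem_inter,
      Finset.mem_union, Finset.mem_compl, not_exists, not_and, not_not,
      Finset.subset_iff, Finset.mem_univ]
    tauto
  have hsum : ∑ K ∈ B.powerset.filter (fun K => (K ∩ I).Nonempty), ν K
      = (∑ K ∈ Finset.univ.powerset.filter (fun K => (K ∩ (I ∪ Bᶜ)).Nonempty), ν K)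
        - ∑ K ∈ Finset.univ.powerset.filter (fun K => (K ∩ Bᶜ).Nonempty), ν K := by
    rw [← hset, Finset.sum_sdiff_eq_sub hsub]
  rw [hsum, h1, h2, Real.log_div ha.ne' hb.ne']
  ring
end

section
/- Let G be a finite connected graph and X a {0,1}-valued process on V(G) satisfying the Markov property, with P(X(A) ≡ 0 | X(∂A) ≡ 0) > 0 for all A ⊆ V(G). Let ν be the unique signed measure corresponding to X. Then for every subset D of V(G) that induces a disconnected subgraph, ν(D) = 0. -/
open MeasureTheory Finset
open scoped Classical

lemma meas_cyl {V : Type*} [Fintype V] (S : Finset V) (f : V → Bool) :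
    MeasurableSet {g : V → Bool | ∀ v ∈ S, g v = f v} := by
  have h : {g : V → Bool | ∀ v ∈ S, g v = f v} = ⋂ v ∈ S, {g : V → Bool | g v = f v} := by
    ext g; simp
  rw [h]
  refine MeasurableSet.biInter (S : Set V).to_countable (fun v _ => ?_)
  have : {g : V → Bool | g v = f v} = (fun g : V → Bool => g v) ⁻¹' {f v} := by
    ext g; simp
  rw [this]
  exact (measurable_pi_apply v) (measurableSet_singleton (f v))

lemma cyl_congr {V : Type*} (S : Finset V) (f : V → Bool) (h : ∀ v ∈ S, f v = false) :
    {g : V → Bool | ∀ v ∈ S, g v = f v} = {g : V → Bool | ∀ v ∈ S, g v = false} :=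
  Set.ext fun g => forall₂_congr (fun v hv => by rw [h v hv])

lemma key_lemma {V : Type*} [Fintype V] [DecidableEq V]
    (μ : Measure (V → Bool))
    (extB : Finset V → Finset V)
    (hMarkov : ∀ (A : Finset V) (f : V → Bool),
      μ ({g | ∀ v ∈ A, g v = f v} ∩ {g | ∀ v ∈ extB A, g v = f v}
          ∩ {g | ∀ v ∈ (A ∪ extB A)ᶜ, g v = f v})
        * μ {g | ∀ v ∈ extB A, g v = f v}
      = μ ({g | ∀ v ∈ A, g v = f v} ∩ {g | ∀ v ∈ extB A, g v = f v})
        * μ ({g | ∀ v ∈ extB A, g v = f v} ∩ {g | ∀ v ∈ (A ∪ extB A)ᶜ, g v = f v}))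
    (I J : Finset V)
    (hIJ : ∀ v ∈ J, v ∉ I) (hEJ : ∀ v ∈ J, v ∉ extB I) (hEI : ∀ v ∈ extB I, v ∉ I) :
    μ {g | ∀ v ∈ (Jᶜ : Finset V), g v = false} * μ {g | ∀ v ∈ extB I, g v = false}
      = μ ({g | ∀ v ∈ I, g v = false} ∩ {g | ∀ v ∈ extB I, g v = false})
        * μ {g | ∀ v ∈ ((I ∪ J)ᶜ : Finset V), g v = false} := by
  set E := extB I with hE
  set R : Finset V → Set (V → Bool) :=
    fun T => {g | ∀ v ∈ ((I ∪ E)ᶜ : Finset V), g v = (if v ∈ T then true else false)} with hR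
  -- each configuration cylinder Markov identity
  have hM : ∀ T ∈ J.powerset,
      μ ({g | ∀ v ∈ I, g v = false} ∩ {g | ∀ v ∈ E, g v = false} ∩ R T)
        * μ {g | ∀ v ∈ E, g v = false}
      = μ ({g | ∀ v ∈ I, g v = false} ∩ {g | ∀ v ∈ E, g v = false})
        * μ ({g | ∀ v ∈ E, g v = false} ∩ R T) := by
    intro T hT
    have hTJ : T ⊆ J := mem_powerset.mp hT
    have h1 : ∀ v ∈ I, (if v ∈ T then true else false) = false := by
      intro v hv; rw [if_neg (fun h => hIJ v (hTJ h) hv)]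
    have h2 : ∀ v ∈ E, (if v ∈ T then true else false) = false := by
      intro v hv; rw [if_neg (fun h => hEJ v (hTJ h) hv)]
    have := hMarkov I (fun v => if v ∈ T then true else false)
    rwa [cyl_congr I _ h1, cyl_congr E _ h2] at this
  -- summing the cylinders over T ⊆ J
  have hJIE : ∀ v ∈ J, v ∈ ((I ∪ E)ᶜ : Finset V) := by
    intro v hv
    simp only [Finset.mem_compl, Finset.mem_union]
    exact fun h => h.elim (hIJ v hv) (hEJ v hv)
  have hUnion : ∀ (W : Set (V → Bool)), MeasurableSet W →
      ∑ T ∈ J.powerset, μ (W ∩ R T)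
        = μ (W ∩ {g | ∀ v ∈ ((I ∪ E)ᶜ : Finset V), v ∉ J → g v = false}) := by
    intro W hW
    have hdisj : (↑J.powerset : Set (Finset V)).PairwiseDisjoint (fun T => W ∩ R T) := by
      intro T hT T' hT' hne
      rw [Finset.mem_coe, Finset.mem_powerset] at hT hT'
      refine Set.disjoint_left.mpr (fun g hg hg' => hne ?_)
      have hgT : g ∈ R T := hg.2
      have hgT' : g ∈ R T' := hg'.2
      ext v
      by_cases hvJ : v ∈ J
      · have hv := hJIE v hvJ
        have e1 := hgT v hv
        have e2 := hgT' v hv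
        rw [e1] at e2
        by_cases h1 : v ∈ T <;> by_cases h2 : v ∈ T' <;> simp_all
      · constructor
        · intro h; exact absurd (hT h) hvJ
        · intro h; exact absurd (hT' h) hvJ
    have hmeas : ∀ T ∈ J.powerset, MeasurableSet (W ∩ R T) :=
      fun T _ => hW.inter (meas_cyl _ _)
    rw [← measure_biUnion_finset hdisj hmeas]
    congr 1
    ext g
    simp only [Set.mem_iUnion, Set.mem_inter_iff, Set.mem_setOf_eq]
    constructor
    · rintro ⟨T, hT, hgW, hgR⟩
      refine ⟨hgW, fun v hv hvJ => ?_⟩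
      rw [hgR v hv, if_neg (fun h => hvJ (mem_powerset.mp hT h))]
    · rintro ⟨hgW, h0⟩
      refine ⟨J.filter (fun v => g v = true), mem_powerset.mpr (filter_subset _ _), hgW, ?_⟩
      intro v hv
      by_cases hvJ : v ∈ J
      · by_cases hgv : g v = true <;> simp [Finset.mem_filter, hvJ, hgv]
      · rw [h0 v hv hvJ]
        have hnm : v ∉ J.filter (fun v => g v = true) := fun h => hvJ (mem_filter.mp h).1
        rw [if_neg hnm]
  -- sum the Markov identities
  have hsum : (∑ T ∈ J.powerset,
        μ ({g | ∀ v ∈ I, g v = false} ∩ {g | ∀ v ∈ E, g v = false} ∩ R T))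
          * μ {g | ∀ v ∈ E, g v = false}
      = μ ({g | ∀ v ∈ I, g v = false} ∩ {g | ∀ v ∈ E, g v = false})
          * ∑ T ∈ J.powerset, μ ({g | ∀ v ∈ E, g v = false} ∩ R T) := by
    rw [Finset.sum_mul, Finset.mul_sum]
    exact Finset.sum_congr rfl hM
  have hm1 : MeasurableSet ({g : V → Bool | ∀ v ∈ I, g v = false}
      ∩ {g | ∀ v ∈ E, g v = false}) :=
    (meas_cyl I (fun _ => false)).inter (meas_cyl E (fun _ => false))
  rw [hUnion _ hm1, hUnion _ (meas_cyl E (fun _ => false))] at hsum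
  have hset1 : {g : V → Bool | ∀ v ∈ I, g v = false} ∩ {g | ∀ v ∈ E, g v = false}
      ∩ {g | ∀ v ∈ ((I ∪ E)ᶜ : Finset V), v ∉ J → g v = false}
      = {g | ∀ v ∈ (Jᶜ : Finset V), g v = false} := by
    ext g
    simp only [Set.mem_inter_iff, Set.mem_setOf_eq, Finset.mem_compl, Finset.mem_union]
    constructor
    · rintro ⟨⟨h1, h2⟩, h3⟩ v hv
      by_cases hvI : v ∈ I
      · exact h1 v hvI
      by_cases hvE : v ∈ E
      · exact h2 v hvE
      · exact h3 v (fun h => h.elim hvI hvE) hv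
    · intro h
      exact ⟨⟨fun v hv => h v (fun hJ => hIJ v hJ hv),
        fun v hv => h v (fun hJ => hEJ v hJ hv)⟩,
        fun v _ hvJ => h v hvJ⟩
  have hset2 : {g : V → Bool | ∀ v ∈ E, g v = false}
      ∩ {g | ∀ v ∈ ((I ∪ E)ᶜ : Finset V), v ∉ J → g v = false}
      = {g | ∀ v ∈ ((I ∪ J)ᶜ : Finset V), g v = false} := by
    ext g
    simp only [Set.mem_inter_iff, Set.mem_setOf_eq, Finset.mem_compl, Finset.mem_union]
    constructor
    · rintro ⟨h2, h3⟩ v hv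
      by_cases hvE : v ∈ E
      · exact h2 v hvE
      · exact h3 v (fun h => h.elim (fun hI => hv (Or.inl hI)) hvE)
          (fun hJ => hv (Or.inr hJ))
    · intro h
      exact ⟨fun v hv => h v (fun hc => hc.elim (hEI v hv) (fun hJ => hEJ v hJ hv)),
        fun v hvc hvJ => h v (fun hc => hc.elim (fun hI => hvc (Or.inl hI)) hvJ)⟩
  rw [hset1, hset2] at hsum
  exact hsum

noncomputable def Lfun {V : Type*} [Fintype V] [DecidableEq V] (μ : Measure (V → Bool))
    (K : Finset V) : ℝ :=
  Real.log ((μ {g | ∀ v ∈ (Kᶜ : Finset V), g v = false}).toReal)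

lemma alt_sum_zero {V : Type*} [DecidableEq V] (B : Finset V) (hB : B.Nonempty) :
    ∑ J ∈ B.powerset, (-1 : ℝ) ^ (B.card - J.card) = 0 := by
  have hz : (∑ m ∈ B.powerset, (-1 : ℤ) ^ m.card) = 0 :=
    Finset.sum_powerset_neg_one_pow_card_of_nonempty hB
  have hzr : (∑ m ∈ B.powerset, (-1 : ℝ) ^ m.card) = 0 := by
    have := congrArg (fun z : ℤ => (z : ℝ)) hz
    push_cast at this
    exact this
  have hterm : ∀ J ∈ B.powerset, (-1 : ℝ) ^ (B.card - J.card)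
      = (-1 : ℝ) ^ B.card * (-1 : ℝ) ^ J.card := by
    intro J hJ
    have hle : J.card ≤ B.card := card_le_card (mem_powerset.mp hJ)
    have hc : (-1 : ℝ) ^ B.card = (-1 : ℝ) ^ (B.card - J.card) * (-1 : ℝ) ^ J.card := by
      rw [← pow_add, Nat.sub_add_cancel hle]
    have h2 : ((-1 : ℝ) ^ J.card) * (-1 : ℝ) ^ J.card = 1 := by
      rw [← pow_add]
      exact Even.neg_one_pow ⟨J.card, rfl⟩
    calc (-1 : ℝ) ^ (B.card - J.card)
        = (-1 : ℝ) ^ (B.card - J.card) * (((-1 : ℝ) ^ J.card) * (-1 : ℝ) ^ J.card) := by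
          rw [h2, mul_one]
      _ = ((-1 : ℝ) ^ (B.card - J.card) * (-1 : ℝ) ^ J.card) * (-1 : ℝ) ^ J.card := by ring
      _ = (-1 : ℝ) ^ B.card * (-1 : ℝ) ^ J.card := by rw [← hc]
  rw [Finset.sum_congr rfl hterm, ← Finset.mul_sum, hzr, mul_zero]


/-- for a `{0,1}`-valued Markov field on a finite connected graph with
positive conditional void probabilities, the unique signed measure `ν`
(given by Möbius inversion) vanishes on every (nonempty) subset inducing a
disconnected subgraph. -/
theorem stmt3 {V : Type*} [Fintype V] [DecidableEq V]
    (G : SimpleGraph V) (hG : G.Connected)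
    (μ : Measure (V → Bool)) [IsProbabilityMeasure μ]
    -- exterior vertex boundary
    (extB : Finset V → Finset V)
    (hextB : ∀ A : Finset V,
      extB A = Finset.univ.filter (fun v => v ∉ A ∧ ∃ u ∈ A, G.Adj u v))
    -- the Markov property: given the configuration on ∂A, the configuration on A is
    -- conditionally independent of the configuration on V ∖ (A ∪ ∂A)
    (hMarkov : ∀ (A : Finset V) (f : V → Bool),
      μ ({g | ∀ v ∈ A, g v = f v} ∩ {g | ∀ v ∈ extB A, g v = f v}
          ∩ {g | ∀ v ∈ (A ∪ extB A)ᶜ, g v = f v})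
        * μ {g | ∀ v ∈ extB A, g v = f v}
      = μ ({g | ∀ v ∈ A, g v = f v} ∩ {g | ∀ v ∈ extB A, g v = f v})
        * μ ({g | ∀ v ∈ extB A, g v = f v} ∩ {g | ∀ v ∈ (A ∪ extB A)ᶜ, g v = f v}))
    -- positivity of the conditional void probabilities
    (hpos : ∀ A : Finset V,
      0 < (ProbabilityTheory.cond μ {g | ∀ v ∈ extB A, g v = false})
            {g | ∀ v ∈ A, g v = false})
    -- the unique signed measure corresponding to X, via Möbius inversion
    (ν : Finset V → ℝ)
    (hν : ∀ K : Finset V,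
      ν K = ∑ I ∈ K.powerset, (-1 : ℝ) ^ (K.card - I.card)
        * Real.log ((μ {g | ∀ v ∈ (Iᶜ : Finset V), g v = false}).toReal)) :
    ∀ D : Finset V, D.Nonempty → ¬ (G.induce (D : Set V)).Connected → ν D = 0 := by
  intro D hD hnc
  -- positivity of the all-zero cylinder
  have hq0 : μ {g : V → Bool | ∀ v ∈ (univ : Finset V), g v = false} ≠ 0 := by
    have h := hpos univ
    have he : extB univ = ∅ := by
      rw [hextB]
      exact Finset.filter_false_of_mem (fun v _ hc => hc.1 (mem_univ v))
    rw [he] at h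
    have hu : {g : V → Bool | ∀ v ∈ (∅ : Finset V), g v = false} = Set.univ := by simp
    rw [hu, ProbabilityTheory.cond_univ] at h
    exact h.ne'
  have hZuniv : ∀ (W : Set (V → Bool)),
      {g : V → Bool | ∀ v ∈ (univ : Finset V), g v = false} ⊆ W → μ W ≠ 0 := by
    intro W hW h0
    exact hq0 (le_antisymm (h0 ▸ measure_mono hW) zero_le)
  -- split D into two nonempty parts with no edges between them
  rw [SimpleGraph.connected_iff] at hnc
  push_neg at hnc
  have hne : Nonempty ((D : Set V) : Type _) := ⟨⟨hD.choose, by simp [hD.choose_spec]⟩⟩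
  obtain ⟨x, y, hxy⟩ : ∃ x y : ((D : Set V) : Type _),
      ¬ (G.induce (D : Set V)).Reachable x y := by
    by_contra hcon
    push_neg at hcon
    exact (hnc (fun a b => hcon a b)).false hne.some
  set A : Finset V := D.filter
    (fun v => ∃ h : v ∈ (D : Set V), (G.induce (D : Set V)).Reachable x ⟨v, h⟩) with hA
  set B : Finset V := D \ A with hB
  have hAD : A ⊆ D := filter_subset _ _
  have hBD : B ⊆ D := sdiff_subset
  have hABdisj : ∀ v ∈ B, v ∉ A := fun v hv => (mem_sdiff.mp hv).2
  have hABD : A ∪ B = D := union_sdiff_of_subset hAD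
  have hxA : (x : V) ∈ A := by
    rcases x with ⟨xv, hx⟩
    exact mem_filter.mpr ⟨Finset.mem_coe.mp hx, ⟨hx, SimpleGraph.Reachable.refl _⟩⟩
  have hyB : (y : V) ∈ B := by
    rcases y with ⟨yv, hy⟩
    refine mem_sdiff.mpr ⟨Finset.mem_coe.mp hy, fun hyA => ?_⟩
    obtain ⟨h', hr⟩ := (mem_filter.mp hyA).2
    exact hxy hr
  have hnoedge : ∀ u ∈ A, ∀ w ∈ B, ¬ G.Adj u w := by
    intro u hu w hw hadj
    obtain ⟨hu', hr⟩ := (mem_filter.mp hu).2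
    have hwD : w ∈ (D : Set V) := Finset.mem_coe.mpr (mem_sdiff.mp hw).1
    have hadj' : (G.induce (D : Set V)).Adj ⟨u, hu'⟩ ⟨w, hwD⟩ := hadj
    exact (mem_sdiff.mp hw).2
      (mem_filter.mpr ⟨(mem_sdiff.mp hw).1, ⟨hwD, hr.trans hadj'.reachable⟩⟩)
  have hAne : A.Nonempty := ⟨_, hxA⟩
  have hBne : B.Nonempty := ⟨_, hyB⟩
  -- the factorization
  have hfact : ∀ I ∈ A.powerset, ∀ J ∈ B.powerset,
      Lfun μ (I ∪ J) = Lfun μ I + Lfun μ J - Lfun μ ∅ := by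
    intro I hI J hJ
    rw [mem_powerset] at hI hJ
    have hIJ : ∀ v ∈ J, v ∉ I := fun v hv hvI => hABdisj v (hJ hv) (hI hvI)
    have hEI : ∀ v ∈ extB I, v ∉ I := by
      intro v hv
      rw [hextB] at hv
      exact (mem_filter.mp hv).2.1
    have hEJ : ∀ v ∈ J, v ∉ extB I := by
      intro v hv hvE
      rw [hextB] at hvE
      obtain ⟨-, u, huI, hadj⟩ := (mem_filter.mp hvE).2
      exact hnoedge u (hI huI) v (hJ hv) hadj
    have e1 := key_lemma μ extB hMarkov I J hIJ hEJ hEI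
    have e2 := key_lemma μ extB hMarkov I ∅ (by simp) (by simp) hEI
    rw [union_empty] at e2
    -- pass to real numbers
    have h1 := congrArg ENNReal.toReal e1
    have h2 := congrArg ENNReal.toReal e2
    rw [ENNReal.toReal_mul, ENNReal.toReal_mul] at h1 h2
    have hsub : ∀ S : Finset V,
        {g : V → Bool | ∀ v ∈ (univ : Finset V), g v = false}
          ⊆ {g : V → Bool | ∀ v ∈ S, g v = false} :=
      fun S g hg v _ => hg v (mem_univ v)
    have pos : ∀ S : Finset V, 0 < (μ {g : V → Bool | ∀ v ∈ S, g v = false}).toReal :=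
      fun S => ENNReal.toReal_pos (hZuniv _ (hsub S)) (measure_ne_top μ _)
    have posm : 0 < (μ ({g : V → Bool | ∀ v ∈ I, g v = false}
        ∩ {g | ∀ v ∈ extB I, g v = false})).toReal := by
      refine ENNReal.toReal_pos (hZuniv _ ?_) (measure_ne_top μ _)
      intro g hg
      exact ⟨fun v _ => hg v (mem_univ v), fun v _ => hg v (mem_univ v)⟩
    set qJ := (μ {g : V → Bool | ∀ v ∈ (Jᶜ : Finset V), g v = false}).toReal with hqJ
    set qI := (μ {g : V → Bool | ∀ v ∈ (Iᶜ : Finset V), g v = false}).toReal with hqI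
    set qIJ := (μ {g : V → Bool | ∀ v ∈ ((I ∪ J)ᶜ : Finset V), g v = false}).toReal with hqIJ
    set q0 := (μ {g : V → Bool | ∀ v ∈ ((∅ : Finset V)ᶜ : Finset V), g v = false}).toReal with hq0'
    set e := (μ {g : V → Bool | ∀ v ∈ extB I, g v = false}).toReal with he'
    set m := (μ ({g : V → Bool | ∀ v ∈ I, g v = false}
        ∩ {g | ∀ v ∈ extB I, g v = false})).toReal with hm'
    have pqJ : 0 < qJ := pos _
    have pqI : 0 < qI := pos _
    have pqIJ : 0 < qIJ := pos _
    have pq0 : 0 < q0 := pos _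
    have pe : 0 < e := pos _
    -- h1 : qJ * e = m * qIJ, h2 : q0 * e = m * qI
    have hkey : qI * qJ = q0 * qIJ := by
      apply mul_right_cancel₀ (ne_of_gt pe)
      linear_combination qI * h1 - qIJ * h2
    have hlog : Real.log (q0 * qIJ) = Real.log (qI * qJ) := by rw [hkey]
    rw [Real.log_mul (ne_of_gt pq0) (ne_of_gt pqIJ),
      Real.log_mul (ne_of_gt pqI) (ne_of_gt pqJ)] at hlog
    show Real.log qIJ = Real.log qI + Real.log qJ - Real.log q0
    linarith
  -- now the alternating double sum vanishes
  have hADB : Disjoint A B := Finset.disjoint_left.mpr (fun v hvA hvB => hABdisj v hvB hvA)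
  have hsplit : D.card = A.card + B.card := by
    rw [← hABD, card_union_of_disjoint hADB]
  rw [hν D]
  show ∑ K ∈ D.powerset, (-1 : ℝ) ^ (D.card - K.card) * Lfun μ K = 0
  have hbij : ∑ K ∈ D.powerset, (-1 : ℝ) ^ (D.card - K.card) * Lfun μ K
      = ∑ p ∈ A.powerset ×ˢ B.powerset,
          (-1 : ℝ) ^ (D.card - (p.1 ∪ p.2).card) * Lfun μ (p.1 ∪ p.2) := by
    refine Finset.sum_bij' (fun K _ => (K ∩ A, K ∩ B)) (fun p _ => p.1 ∪ p.2)
      ?_ ?_ ?_ ?_ ?_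
    · intro K _
      rw [Finset.mem_product]
      exact ⟨mem_powerset.mpr inter_subset_right, mem_powerset.mpr inter_subset_right⟩
    · intro p hp
      rw [Finset.mem_product] at hp
      rw [mem_powerset]
      exact union_subset ((mem_powerset.mp hp.1).trans hAD) ((mem_powerset.mp hp.2).trans hBD)
    · intro K hK
      show K ∩ A ∪ K ∩ B = K
      rw [← Finset.inter_union_distrib_left, hABD,
        inter_eq_left.mpr (mem_powerset.mp hK)]
    · intro p hp
      rw [Finset.mem_product] at hp
      have hpA : p.1 ⊆ A := mem_powerset.mp hp.1
      have hpB : p.2 ⊆ B := mem_powerset.mp hp.2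
      have e1 : p.2 ∩ A = ∅ := Finset.eq_empty_iff_forall_notMem.mpr
        (fun v hv => hABdisj v (hpB (mem_inter.mp hv).1) (mem_inter.mp hv).2)
      have e2 : p.1 ∩ B = ∅ := Finset.eq_empty_iff_forall_notMem.mpr
        (fun v hv => hABdisj v (mem_inter.mp hv).2 (hpA (mem_inter.mp hv).1))
      have h1 : (p.1 ∪ p.2) ∩ A = p.1 := by
        rw [Finset.union_inter_distrib_right, inter_eq_left.mpr hpA, e1, union_empty]
      have h2 : (p.1 ∪ p.2) ∩ B = p.2 := by
        rw [Finset.union_inter_distrib_right, inter_eq_left.mpr hpB, e2, empty_union]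
      exact Prod.ext h1 h2
    · intro K hK
      have hKK : K ∩ A ∪ K ∩ B = K := by
        rw [← Finset.inter_union_distrib_left, hABD,
          inter_eq_left.mpr (mem_powerset.mp hK)]
      show (-1 : ℝ) ^ (D.card - K.card) * Lfun μ K
        = (-1 : ℝ) ^ (D.card - (K ∩ A ∪ K ∩ B).card) * Lfun μ (K ∩ A ∪ K ∩ B)
      rw [hKK]
  rw [hbij, Finset.sum_product]
  have hterm : ∀ I ∈ A.powerset, ∀ J ∈ B.powerset,
      (-1 : ℝ) ^ (D.card - (I ∪ J).card) * Lfun μ (I ∪ J)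
        = (-1 : ℝ) ^ (A.card - I.card)
            * ((-1 : ℝ) ^ (B.card - J.card) * (Lfun μ I + Lfun μ J - Lfun μ ∅)) := by
    intro I hI J hJ
    have hIs := mem_powerset.mp hI
    have hJs := mem_powerset.mp hJ
    have hdisj : Disjoint I J := Finset.disjoint_left.mpr
      (fun v hvI hvJ => hABdisj v (hJs hvJ) (hIs hvI))
    have h1 : (I ∪ J).card = I.card + J.card := card_union_of_disjoint hdisj
    have hca := card_le_card hIs
    have hcb := card_le_card hJs
    have h2 : D.card - (I ∪ J).card = (A.card - I.card) + (B.card - J.card) := by omega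
    rw [h2, pow_add, hfact I hI J hJ]
    ring
  rw [Finset.sum_congr rfl (fun I hI => Finset.sum_congr rfl (fun J hJ => hterm I hI J hJ))]
  have hT0 : ∑ J ∈ B.powerset, (-1 : ℝ) ^ (B.card - J.card) = 0 := alt_sum_zero B hBne
  have hS0 : ∑ I ∈ A.powerset, (-1 : ℝ) ^ (A.card - I.card) = 0 := alt_sum_zero A hAne
  have hinner : ∀ I ∈ A.powerset,
      ∑ J ∈ B.powerset, (-1 : ℝ) ^ (A.card - I.card)
          * ((-1 : ℝ) ^ (B.card - J.card) * (Lfun μ I + Lfun μ J - Lfun μ ∅))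
        = (-1 : ℝ) ^ (A.card - I.card)
            * ∑ J ∈ B.powerset, (-1 : ℝ) ^ (B.card - J.card) * Lfun μ J := by
    intro I _
    rw [← Finset.mul_sum]
    congr 1
    have : ∀ J ∈ B.powerset,
        (-1 : ℝ) ^ (B.card - J.card) * (Lfun μ I + Lfun μ J - Lfun μ ∅)
          = (-1 : ℝ) ^ (B.card - J.card) * (Lfun μ I - Lfun μ ∅)
            + (-1 : ℝ) ^ (B.card - J.card) * Lfun μ J := by
      intro J _; ring
    rw [Finset.sum_congr rfl this, Finset.sum_add_distrib, ← Finset.sum_mul, hT0,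
      zero_mul, zero_add]
  rw [Finset.sum_congr rfl hinner, ← Finset.sum_mul, hS0, zero_mul]
end

section
/- Let T be a finite tree and X a tree-indexed Markov chain on T with parameters (r, (p_e)) where r ∈ (0,1] and p_e ∈ [0,1]. For a singleton set S = {o} where o is the root, the unique signed measure ν corresponding to X satisfies ν({o}) = log( (r ∏_{e ∈ E_o}(1-p_e+p_e r) + (1-r)∏_{e ∈ E_o}(p_e r)) / (r ∏_{e ∈ E_o}(1-p_e+p_e r)) ), where E_o is the set of edges incident to o; in particular ν({o}) ≥ 0. -/
open Finset
open scoped Classical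

/-- for a tree-indexed Markov chain on a finite tree with vertex
parameter `r ∈ (0,1]` and edge parameters `p_e ∈ [0,1]`, the unique signed measure
satisfies
`ν({o}) = log((r ∏_{e∈E_o}(1-p_e+p_e r) + (1-r)∏_{e∈E_o}(p_e r)) / (r ∏_{e∈E_o}(1-p_e+p_e r)))`,
where `E_o` is the set of edges incident to the root `o`; in particular `ν({o}) ≥ 0`.
The finite tree is encoded by its vertex set `V` and parent map `par` rooted at `o`
(edges are the pairs `(par v, v)` for `v ≠ o`, and `pe v` is the parameter of the
edge above `v`). -/
theorem stmt11 {V : Type*} [Fintype V] [DecidableEq V]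
    (o : V) (par : V → V) (hpar : par o = o)
    (htree : ∀ v : V, ∃ n : ℕ, par^[n] v = o)
    (r : ℝ) (hr : r ∈ Set.Ioc (0 : ℝ) 1)
    (pe : V → ℝ) (hpe : ∀ v, pe v ∈ Set.Icc (0 : ℝ) 1)
    -- the law of the tree-indexed Markov chain
    (w : (V → Bool) → ℝ)
    (hw : ∀ f : V → Bool,
      w f = (if f o = false then r else 1 - r)
        * ∏ v ∈ Finset.univ.erase o,
            ((if f v = f (par v) then 1 - pe v else 0)
              + pe v * (if f v = false then r else 1 - r)))
    (P0 : Finset V → ℝ)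
    (hP0 : ∀ I : Finset V,
      P0 I = ∑ f : V → Bool, (if ∀ v ∈ I, f v = false then (1 : ℝ) else 0) * w f)
    -- ν is the unique signed measure corresponding to the chain
    (ν : Finset V → ℝ) (hν0 : ν ∅ = 0)
    (hν : ∀ I : Finset V,
      ∑ K ∈ Finset.univ.powerset.filter (fun K => (K ∩ I).Nonempty), ν K
        = - Real.log (P0 I)) :
    ν {o}
      = Real.log
          ((r * ∏ v ∈ Finset.univ.filter (fun v => v ≠ o ∧ par v = o),
              (1 - pe v + pe v * r)
            + (1 - r) * ∏ v ∈ Finset.univ.filter (fun v => v ≠ o ∧ par v = o),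
                (pe v * r))
          / (r * ∏ v ∈ Finset.univ.filter (fun v => v ≠ o ∧ par v = o),
              (1 - pe v + pe v * r))) ∧
    0 ≤ ν {o} := by
  obtain ⟨hr0, hr1⟩ := hr
  have hApos : ∀ v : V, 0 < 1 - pe v + pe v * r := by
    intro v
    obtain ⟨h1, h2⟩ := hpe v
    nlinarith
  set C : Finset V := Finset.univ.filter (fun v => v ≠ o ∧ par v = o) with hC
  set Q : Finset V := (Finset.univ.erase o).filter (fun v => ¬ par v = o) with hQ
  set A : ℝ := ∏ v ∈ C, (1 - pe v + pe v * r) with hAdef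
  set B : ℝ := ∏ v ∈ C, (pe v * r) with hBdef
  set D : ℝ := ∏ v ∈ Q, (1 - pe v + pe v * r) with hDdef
  have hCeq : (Finset.univ.erase o).filter (fun v => par v = o) = C := by
    ext v
    simp [hC, and_comm, mem_erase, mem_filter]
  have hA : 0 < A := Finset.prod_pos (fun v _ => hApos v)
  have hD : 0 < D := Finset.prod_pos (fun v _ => hApos v)
  have hB : 0 ≤ B := Finset.prod_nonneg (fun v _ => by
    obtain ⟨h1, h2⟩ := hpe v; positivity)
  -- the two distinguished configurations
  set g0 : V → Bool := fun _ => false with hg0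
  set g1 : V → Bool := fun v => if v = o then true else false with hg1
  have hg1o : g1 o = true := by simp [hg1]
  have hne : g0 ≠ g1 := by
    intro h
    have := congrFun h o
    simp [hg0, hg1] at this
  -- value of w at g0
  have hwg0 : w g0 = r * (A * D) := by
    rw [hw g0]
    have h1 : ∏ v ∈ Finset.univ.erase o,
        ((if g0 v = g0 (par v) then 1 - pe v else 0)
          + pe v * (if g0 v = false then r else 1 - r))
        = ∏ v ∈ Finset.univ.erase o, (1 - pe v + pe v * r) := by
      apply Finset.prod_congr rfl
      intro v _
      simp [hg0]
    rw [h1]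
    rw [← Finset.prod_filter_mul_prod_filter_not (Finset.univ.erase o)
      (fun v => par v = o) (fun v => 1 - pe v + pe v * r)]
    rw [hCeq]
    simp [hg0, hQ, hAdef, hDdef]
  -- value of w at g1
  have hwg1 : w g1 = (1 - r) * (B * D) := by
    rw [hw g1]
    have h1 : ∏ v ∈ Finset.univ.erase o,
        ((if g1 v = g1 (par v) then 1 - pe v else 0)
          + pe v * (if g1 v = false then r else 1 - r))
        = ∏ v ∈ Finset.univ.erase o,
            ((if par v = o then 0 else 1 - pe v) + pe v * r) := by
      apply Finset.prod_congr rfl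
      intro v hv
      have hvo : v ≠ o := (Finset.mem_erase.1 hv).1
      by_cases h : par v = o <;> simp [hg1, hvo, h]
    rw [h1]
    rw [← Finset.prod_filter_mul_prod_filter_not (Finset.univ.erase o)
      (fun v => par v = o) (fun v => (if par v = o then 0 else 1 - pe v) + pe v * r)]
    rw [hCeq]
    have h2 : ∏ v ∈ C, ((if par v = o then 0 else 1 - pe v) + pe v * r)
        = B := by
      rw [hBdef]
      apply Finset.prod_congr rfl
      intro v hv
      have : par v = o := (Finset.mem_filter.1 hv).2.2
      simp [this, mul_comm]
    have h3 : ∏ v ∈ (Finset.univ.erase o).filter (fun v => ¬ par v = o),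
        ((if par v = o then 0 else 1 - pe v) + pe v * r) = D := by
      rw [hDdef, hQ]
      apply Finset.prod_congr rfl
      intro v hv
      have : ¬ par v = o := (Finset.mem_filter.1 hv).2
      simp [this]
    rw [h2, h3]
    simp [hg1]
  -- P0 at univ
  have hPu : P0 Finset.univ = r * (A * D) := by
    rw [hP0]
    rw [Finset.sum_eq_single g0]
    · rw [hwg0]; simp [hg0]
    · intro f _ hf
      have : ¬ ∀ v ∈ Finset.univ, f v = false := by
        intro h
        apply hf
        funext v
        exact h v (Finset.mem_univ v)
      rw [if_neg this, zero_mul]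
    · intro h
      exact absurd (Finset.mem_univ g0) h
  -- P0 at univ.erase o
  have hPe : P0 (Finset.univ.erase o) = r * (A * D) + (1 - r) * (B * D) := by
    rw [hP0]
    have hsub : ({g0, g1} : Finset (V → Bool)) ⊆ Finset.univ := Finset.subset_univ _
    rw [← Finset.sum_subset hsub]
    · rw [Finset.sum_pair hne]
      have hi0 : (∀ v ∈ Finset.univ.erase o, g0 v = false) := by
        intro v _; simp [hg0]
      have hi1 : (∀ v ∈ Finset.univ.erase o, g1 v = false) := by
        intro v hv
        simp [hg1, (Finset.mem_erase.1 hv).1]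
      rw [if_pos hi0, if_pos hi1, one_mul, one_mul, hwg0, hwg1]
    · intro f _ hf
      have : ¬ ∀ v ∈ Finset.univ.erase o, f v = false := by
        intro h
        apply hf
        simp only [Finset.mem_insert, Finset.mem_singleton]
        by_cases hfo : f o = false
        · left
          funext v
          by_cases hv : v = o
          · subst hv; simp [hg0, hfo]
          · simp [hg0, h v (Finset.mem_erase.2 ⟨hv, Finset.mem_univ v⟩)]
        · right
          funext v
          by_cases hv : v = o
          · subst hv
            simp [hg1]
            revert hfo; cases f v <;> simp
          · simp [hg1, hv, h v (Finset.mem_erase.2 ⟨hv, Finset.mem_univ v⟩)]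
      rw [if_neg this, zero_mul]
  -- extract ν {o}
  have key : ν {o} = Real.log (P0 (Finset.univ.erase o)) - Real.log (P0 Finset.univ) := by
    have h1 := hν Finset.univ
    have h2 := hν (Finset.univ.erase o)
    have hins : Finset.univ.powerset.filter (fun K => (K ∩ Finset.univ).Nonempty)
        = insert {o} (Finset.univ.powerset.filter
            (fun K => (K ∩ Finset.univ.erase o).Nonempty)) := by
      ext K
      simp only [Finset.mem_insert, Finset.mem_filter, Finset.mem_powerset,
        Finset.subset_univ, true_and, Finset.inter_univ]
      constructor
      · intro hK
        by_cases h : ∃ v ∈ K, v ≠ o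
        · right
          obtain ⟨v, hv, hvo⟩ := h
          exact ⟨v, Finset.mem_inter.2 ⟨hv, Finset.mem_erase.2 ⟨hvo, Finset.mem_univ v⟩⟩⟩
        · left
          push_neg at h
          obtain ⟨x, hx⟩ := hK
          have hxo := h x hx
          subst hxo
          ext y
          simp only [Finset.mem_singleton]
          constructor
          · intro hy; exact h y hy
          · intro hy; subst hy; exact hx
      · rintro (rfl | ⟨v, hv⟩)
        · exact ⟨o, Finset.mem_singleton_self o⟩
        · exact ⟨v, (Finset.mem_inter.1 hv).1⟩
    have hni : ({o} : Finset V) ∉ Finset.univ.powerset.filter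
        (fun K => (K ∩ Finset.univ.erase o).Nonempty) := by
      simp [Finset.Nonempty, Finset.mem_inter]
    rw [hins, Finset.sum_insert hni, h2] at h1
    linarith
  have hpos1 : 0 < r * A * D := by positivity
  have hpos2 : 0 < r * A + (1 - r) * B := by nlinarith
  have hfinal : ν {o} = Real.log ((r * A + (1 - r) * B) / (r * A)) := by
    rw [key, hPe, hPu]
    have : r * (A * D) + (1 - r) * (B * D) = (r * A + (1 - r) * B) * D := by ring
    rw [this]
    rw [Real.log_mul (ne_of_gt hpos2) (ne_of_gt hD)]
    have : r * (A * D) = (r * A) * D := by ring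
    rw [this]
    rw [Real.log_mul (by positivity) (ne_of_gt hD)]
    rw [Real.log_div (ne_of_gt hpos2) (by positivity)]
    ring
  refine ⟨hfinal, ?_⟩
  rw [hfinal]
  apply Real.log_nonneg
  rw [le_div_iff₀ (by positivity)]
  nlinarith
end

section
/- Let S be a finite set and X a {0,1}-valued process on S with P(X(I) ≡ 0) > 0 for all I ⊆ S. If the unique signed measure ν corresponding to X (given by Möbius inversion) is nonnegative, then X is equal in distribution to X^ν, the indicator of the union of a Poisson process of subsets with intensity ν; in particular X is Poisson representable. -/
open MeasureTheory Finset
open scoped Classical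

open ProbabilityTheory
open scoped ENNReal NNReal


namespace Stmt16Aux

variable {ι : Type*} [Fintype ι] [DecidableEq ι]

noncomputable def pm (r : ι → ℝ≥0) : Measure (ι → ℕ) :=
  Measure.pi (fun i => poissonMeasure (r i))

instance (r : ι → ℝ≥0) : IsProbabilityMeasure (pm r) := by
  unfold pm; infer_instance

lemma measSet (s : Set (ι → ℕ)) : MeasurableSet s := by
  have h1 : ∀ f : ι → ℕ, MeasurableSet ({f} : Set (ι → ℕ)) := by
    intro f
    have : ({f} : Set (ι → ℕ)) = Set.pi Set.univ (fun i => {f i}) := by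
      ext g; simp [funext_iff, Set.mem_pi]
    rw [this]
    exact MeasurableSet.univ_pi (fun i => measurableSet_singleton _)
  have h2 : s = ⋃ f ∈ s, {f} := by simp
  rw [h2]
  exact MeasurableSet.biUnion s.to_countable (fun f _ => h1 f)

lemma pm_cyl (r : ι → ℝ≥0) (A : Finset ι) (f : ι → ℕ) :
    pm r {ω | ∀ i ∈ A, ω i = f i}
      = ∏ i ∈ A, ENNReal.ofReal (poissonPMFReal (r i) (f i)) := by
  have hset : {ω : ι → ℕ | ∀ i ∈ A, ω i = f i}
      = Set.pi Set.univ (fun i => if i ∈ A then {f i} else Set.univ) := by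
    ext ω
    simp only [Set.mem_pi, Set.mem_univ, true_implies, Set.mem_setOf_eq]
    constructor
    · intro h i; split_ifs with hi
      · exact h i hi
      · exact Set.mem_univ _
    · intro h i hi; have := h i; rwa [if_pos hi] at this
  rw [pm, hset, Measure.pi_pi]
  rw [← Finset.prod_subset (Finset.subset_univ A) (fun i _ hi => by
    rw [if_neg hi]; exact measure_univ)]
  refine Finset.prod_congr rfl fun i hi => ?_
  rw [if_pos hi, poissonMeasure_singleton]
  rfl

lemma cyl_disjoint (A : Finset ι) {n : ℕ} {f g : ι → ℕ}
    (hf : f ∈ piAntidiag A n) (hg : g ∈ piAntidiag A n) (hfg : f ≠ g) :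
    Disjoint {ω : ι → ℕ | ∀ i ∈ A, ω i = f i} {ω | ∀ i ∈ A, ω i = g i} := by
  rw [Set.disjoint_left]
  intro ω hωf hωg
  apply hfg
  rw [mem_piAntidiag] at hf hg
  funext i
  by_cases hi : i ∈ A
  · rw [← hωf i hi, ← hωg i hi]
  · rw [of_not_not (fun h => hi (hf.2 i h)), of_not_not (fun h => hi (hg.2 i h))]

lemma event_decomp (A : Finset ι) (n : ℕ) :
    {ω : ι → ℕ | ∑ i ∈ A, ω i = n}
      = ⋃ f ∈ piAntidiag A n, {ω | ∀ i ∈ A, ω i = f i} := by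
  ext ω
  simp only [Set.mem_setOf_eq, Set.mem_iUnion, exists_prop]
  constructor
  · intro h
    refine ⟨fun i => if i ∈ A then ω i else 0, ?_, ?_⟩
    · rw [mem_piAntidiag]
      constructor
      · rw [← h]; exact Finset.sum_congr rfl fun i hi => if_pos hi
      · intro i hi; by_contra h'; exact hi (if_neg h')
    · intro i hi; simp [hi]
  · rintro ⟨f, hf, hωf⟩
    rw [mem_piAntidiag] at hf
    rw [← hf.1]
    exact Finset.sum_congr rfl fun i hi => hωf i hi

lemma pm_count_sum (r : ι → ℝ≥0) (A : Finset ι) (n : ℕ) :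
    pm r {ω | ∑ i ∈ A, ω i = n}
      = ∑ f ∈ piAntidiag A n, ∏ i ∈ A, ENNReal.ofReal (poissonPMFReal (r i) (f i)) := by
  rw [event_decomp, measure_biUnion_finset ?_ (fun f _ => measSet _)]
  · exact Finset.sum_congr rfl fun f _ => pm_cyl r A f
  · intro f hf g hg hfg
    exact cyl_disjoint A hf hg hfg

lemma sum_piAntidiag_prod_pow_div (A : Finset ι) (c : ι → ℝ) (n : ℕ) :
    ∑ f ∈ piAntidiag A n, ∏ i ∈ A, c i ^ f i / ((f i).factorial : ℝ)
      = (∑ i ∈ A, c i) ^ n / (n.factorial : ℝ) := by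
  rw [Finset.sum_pow_eq_sum_piAntidiag, Finset.sum_div]
  refine Finset.sum_congr rfl fun f hf => ?_
  rw [mem_piAntidiag] at hf
  have key : ((∏ i ∈ A, (f i).factorial : ℕ) : ℝ) * (Nat.multinomial A f : ℝ) = (n.factorial : ℝ) := by
    rw [← hf.1]; exact_mod_cast congrArg (Nat.cast (R := ℝ)) (Nat.multinomial_spec A f)
  have hpos : (0:ℝ) < ∏ i ∈ A, ((f i).factorial : ℝ) := by positivity
  rw [Finset.prod_div_distrib]
  rw [eq_div_iff (by positivity : (n.factorial : ℝ) ≠ 0), ← key]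
  push_cast
  field_simp

lemma pm_count (r : ι → ℝ≥0) (A : Finset ι) (n : ℕ) :
    pm r {ω | ∑ i ∈ A, ω i = n}
      = ENNReal.ofReal (poissonPMFReal (∑ i ∈ A, r i) n) := by
  rw [pm_count_sum]
  have h1 : ∀ f : ι → ℕ, ∏ i ∈ A, ENNReal.ofReal (poissonPMFReal (r i) (f i))
      = ENNReal.ofReal (∏ i ∈ A, poissonPMFReal (r i) (f i)) := fun f =>
    (ENNReal.ofReal_prod_of_nonneg fun i _ => poissonPMFReal_nonneg).symm
  simp_rw [h1]
  rw [← ENNReal.ofReal_sum_of_nonneg (fun f _ => Finset.prod_nonneg fun i _ =>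
    poissonPMFReal_nonneg)]
  congr 1
  unfold poissonPMFReal
  simp_rw [mul_div_assoc, Finset.prod_mul_distrib, ← Real.exp_sum]
  rw [← Finset.mul_sum, sum_piAntidiag_prod_pow_div]
  push_cast
  rw [Finset.sum_neg_distrib]

lemma pm_count_inter (r : ι → ℝ≥0) {A B : Finset ι} (hAB : Disjoint A B) (n n' : ℕ) :
    pm r ({ω | ∑ i ∈ A, ω i = n} ∩ {ω | ∑ i ∈ B, ω i = n'})
      = pm r {ω | ∑ i ∈ A, ω i = n} * pm r {ω | ∑ i ∈ B, ω i = n'} := by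
  have hE : {ω : ι → ℕ | ∑ i ∈ A, ω i = n} ∩ {ω | ∑ i ∈ B, ω i = n'}
      = ⋃ p ∈ (piAntidiag A n) ×ˢ (piAntidiag B n'),
          ({ω : ι → ℕ | ∀ i ∈ A, ω i = p.1 i} ∩ {ω | ∀ i ∈ B, ω i = p.2 i}) := by
    rw [event_decomp A n, event_decomp B n']
    ext ω
    simp only [Set.mem_inter_iff, Set.mem_iUnion, exists_prop, Finset.mem_product]
    constructor
    · rintro ⟨⟨f, hf, h1⟩, ⟨g, hg, h2⟩⟩
      exact ⟨(f, g), ⟨hf, hg⟩, h1, h2⟩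
    · rintro ⟨p, ⟨hp1, hp2⟩, h1, h2⟩
      exact ⟨⟨p.1, hp1, h1⟩, ⟨p.2, hp2, h2⟩⟩
  rw [hE, measure_biUnion_finset ?_ (fun p _ => measSet _)]
  · have hcylval : ∀ p : (ι → ℕ) × (ι → ℕ),
        pm r ({ω : ι → ℕ | ∀ i ∈ A, ω i = p.1 i} ∩ {ω | ∀ i ∈ B, ω i = p.2 i})
          = (∏ i ∈ A, ENNReal.ofReal (poissonPMFReal (r i) (p.1 i)))
            * ∏ i ∈ B, ENNReal.ofReal (poissonPMFReal (r i) (p.2 i)) := by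
      intro p
      have hs : {ω : ι → ℕ | ∀ i ∈ A, ω i = p.1 i} ∩ {ω | ∀ i ∈ B, ω i = p.2 i}
          = {ω : ι → ℕ | ∀ i ∈ A ∪ B, ω i = (if i ∈ A then p.1 i else p.2 i)} := by
        ext ω
        simp only [Set.mem_inter_iff, Set.mem_setOf_eq, Finset.mem_union]
        constructor
        · rintro ⟨h1, h2⟩ i hi
          rcases hi with hi | hi
          · rw [if_pos hi]; exact h1 i hi
          · rw [if_neg (fun hA => Finset.disjoint_left.mp hAB hA hi)]; exact h2 i hi
        · intro h
          constructor
          · intro i hi; have := h i (Or.inl hi); rwa [if_pos hi] at this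
          · intro i hi
            have := h i (Or.inr hi)
            rwa [if_neg (fun hA => Finset.disjoint_left.mp hAB hA hi)] at this
      rw [hs, pm_cyl, Finset.prod_union hAB]
      congr 1
      · exact Finset.prod_congr rfl fun i hi => by rw [if_pos hi]
      · exact Finset.prod_congr rfl fun i hi =>
          by rw [if_neg (fun hA => Finset.disjoint_left.mp hAB hA hi)]
    rw [Finset.sum_congr rfl (fun p _ => hcylval p), Finset.sum_product,
      pm_count_sum, pm_count_sum, Finset.sum_mul_sum]
  · intro p hp q hq hpq
    simp only [Finset.coe_product, Set.mem_prod, Finset.mem_coe] at hp hq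
    by_cases h1 : p.1 = q.1
    · have h2 : p.2 ≠ q.2 := fun h2 => hpq (Prod.ext h1 h2)
      exact Disjoint.mono (Set.inter_subset_right) (Set.inter_subset_right)
        (cyl_disjoint B hp.2 hq.2 h2)
    · exact Disjoint.mono (Set.inter_subset_left) (Set.inter_subset_left)
        (cyl_disjoint A hp.1 hq.1 h1)


lemma countP_finset_sum {α β : Type*} (s : Finset α) (f : α → Multiset β)
    (p : β → Prop) [DecidablePred p] :
    Multiset.countP p (∑ a ∈ s, f a) = ∑ a ∈ s, Multiset.countP p (f a) := by
  classical
  induction s using Finset.cons_induction with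
  | empty => simp
  | cons a s ha ih => rw [Finset.sum_cons, Finset.sum_cons, Multiset.countP_add, ih]

lemma countP_replicate {β : Type*} (p : β → Prop) [DecidablePred p] (n : ℕ) (b : β) :
    Multiset.countP p (Multiset.replicate n b) = if p b then n else 0 := by
  induction n with
  | zero => simp
  | succ n ih =>
    rw [Multiset.replicate_succ, Multiset.countP_cons, ih]
    split_ifs <;> simp

lemma mobius {α : Type*} [DecidableEq α] (g : Finset α → ℝ) (ν : Finset α → ℝ)
    (hν : ∀ K, ν K = ∑ I ∈ K.powerset, (-1 : ℝ) ^ (K.card - I.card) * g I)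
    (L : Finset α) :
    ∑ K ∈ L.powerset, ν K = g L := by
  have inner : ∀ I ∈ L.powerset,
      ∑ K ∈ L.powerset.filter (fun K => I ⊆ K), (-1 : ℝ) ^ (K.card - I.card)
        = if I = L then 1 else 0 := by
    intro I hI
    rw [Finset.mem_powerset] at hI
    have h1 : ∑ K ∈ L.powerset.filter (fun K => I ⊆ K), (-1 : ℝ) ^ (K.card - I.card)
        = ∑ T ∈ (L \ I).powerset, (-1 : ℝ) ^ T.card := by
      refine Finset.sum_nbij' (fun K => K \ I) (fun T => I ∪ T) ?_ ?_ ?_ ?_ ?_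
      · intro K hK
        rw [Finset.mem_filter, Finset.mem_powerset] at hK
        rw [Finset.mem_powerset]
        exact Finset.sdiff_subset_sdiff hK.1 le_rfl
      · intro T hT
        rw [Finset.mem_powerset] at hT
        rw [Finset.mem_filter, Finset.mem_powerset]
        exact ⟨Finset.union_subset hI (hT.trans (Finset.sdiff_subset)),
          Finset.subset_union_left⟩
      · intro K hK
        rw [Finset.mem_filter] at hK
        exact Finset.union_sdiff_of_subset hK.2
      · intro T hT
        rw [Finset.mem_powerset] at hT
        refine Finset.union_sdiff_cancel_left ?_
        exact Finset.disjoint_left.mpr fun i hiI hiT =>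
          (Finset.mem_sdiff.mp (hT hiT)).2 hiI
      · intro K hK
        rw [Finset.mem_filter] at hK
        rw [Finset.card_sdiff_of_subset hK.2]
    rw [h1]
    have h2 := Finset.sum_powerset_neg_one_pow_card (x := L \ I)
    have h3 : ∑ T ∈ (L \ I).powerset, (-1 : ℝ) ^ T.card
        = (((∑ T ∈ (L \ I).powerset, (-1 : ℤ) ^ T.card) : ℤ) : ℝ) := by push_cast; rfl
    rw [h3, h2]
    by_cases h : L \ I = ∅
    · rw [if_pos h, if_pos ((Finset.sdiff_eq_empty_iff_subset.mp h).antisymm hI).symm]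
      norm_num
    · rw [if_neg h, if_neg (fun hIL => h (by rw [hIL, Finset.sdiff_self]))]
      norm_num
  calc ∑ K ∈ L.powerset, ν K
      = ∑ K ∈ L.powerset, ∑ I ∈ K.powerset, (-1 : ℝ) ^ (K.card - I.card) * g I :=
        Finset.sum_congr rfl fun K _ => hν K
    _ = ∑ I ∈ L.powerset, ∑ K ∈ L.powerset.filter (fun K => I ⊆ K),
          (-1 : ℝ) ^ (K.card - I.card) * g I := by
        refine Finset.sum_comm' fun K I => ?_
        simp only [Finset.mem_powerset, Finset.mem_filter]
        constructor
        · rintro ⟨h1, h2⟩; exact ⟨⟨h1, h2⟩, h2.trans h1⟩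
        · rintro ⟨⟨h1, h2⟩, _⟩; exact ⟨h1, h2⟩
    _ = ∑ I ∈ L.powerset, (if I = L then 1 else 0) * g I := by
        refine Finset.sum_congr rfl fun I hI => ?_
        rw [← Finset.sum_mul, inner I hI]
    _ = g L := by
        simp only [ite_mul, one_mul, zero_mul]
        rw [Finset.sum_ite_eq' L.powerset L g]
        rw [if_pos (Finset.mem_powerset.mpr le_rfl)]

end Stmt16Aux

/-- if the signed measure `ν` obtained by Möbius inversion from the void
probabilities of a `{0,1}`-valued process `X` on a finite set `S` is nonnegative,
then `X` is equal in distribution to `X^ν`: there is a Poisson process `Z` of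
nonempty subsets of `S` with intensity `ν` (Poisson counts and independence over
disjoint families) such that the indicator of the union of `Z` has exactly the void
probabilities of `X`. In particular, `X` is Poisson representable. -/
theorem stmt16 {S : Type*} [Fintype S] [DecidableEq S]
    {Ω0 : Type*} [MeasurableSpace Ω0] (μ0 : Measure Ω0) [IsProbabilityMeasure μ0]
    (X : Ω0 → S → Bool) (P0 : Finset S → ℝ)
    (hP0 : ∀ I : Finset S, P0 I = (μ0 {ω | ∀ i ∈ I, X ω i = false}).toReal)
    (hpos : ∀ I : Finset S, 0 < P0 I)
    (ν : Finset S → ℝ)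
    (hν : ∀ K : Finset S,
      ν K = ∑ I ∈ K.powerset, (-1 : ℝ) ^ (K.card - I.card) * Real.log (P0 Iᶜ))
    (hnonneg : ∀ K : Finset S, K.Nonempty → 0 ≤ ν K) :
    ∃ (Ω : Type) (_ : MeasurableSpace Ω) (μ : Measure Ω) (_ : IsProbabilityMeasure μ)
      (Z : Ω → Multiset (Finset S)),
      -- Z consists of nonempty subsets of S
      (∀ ω, ∀ B ∈ Z ω, B.Nonempty) ∧
      -- Poisson counts with intensity ν
      (∀ (𝒜 : Set (Finset S)) (n : ℕ),
        μ {ω | (Z ω).countP (· ∈ 𝒜) = n}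
          = ENNReal.ofReal
              (Real.exp (-(∑ K ∈ Finset.univ.filter (fun K => K ∈ 𝒜 ∧ K.Nonempty), ν K))
                * (∑ K ∈ Finset.univ.filter (fun K => K ∈ 𝒜 ∧ K.Nonempty), ν K) ^ n
                / n.factorial)) ∧
      -- independence of the counts over disjoint families
      (∀ (𝒜 ℬ : Set (Finset S)), Disjoint 𝒜 ℬ → ∀ n n' : ℕ,
        μ ({ω | (Z ω).countP (· ∈ 𝒜) = n} ∩ {ω | (Z ω).countP (· ∈ ℬ) = n'})
          = μ {ω | (Z ω).countP (· ∈ 𝒜) = n} * μ {ω | (Z ω).countP (· ∈ ℬ) = n'}) ∧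
      -- X^ν, the indicator of the union of Z, has the same distribution as X
      (∀ I : Finset S,
        μ {ω | ∀ i ∈ I, (decide (∃ B ∈ Z ω, i ∈ B)) = false}
          = ENNReal.ofReal (P0 I)) := by
  classical
  -- basic facts about P0
  have hP0empty : P0 ∅ = 1 := by
    rw [hP0]
    have h : {ω : Ω0 | ∀ i ∈ (∅ : Finset S), X ω i = false} = Set.univ := by
      ext ω; simp
    rw [h, measure_univ, ENNReal.toReal_one]
  -- Möbius inversion
  have hmob : ∀ L : Finset S, ∑ K ∈ L.powerset, ν K = Real.log (P0 Lᶜ) :=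
    Stmt16Aux.mobius (fun I => Real.log (P0 Iᶜ)) ν hν
  -- the index type in `Type 0`
  set m := Fintype.card (Finset S) with hm
  set e : Finset S ≃ Fin m := Fintype.equivFin (Finset S) with he
  set r : Fin m → ℝ≥0 :=
    fun j => if (e.symm j).Nonempty then (ν (e.symm j)).toNNReal else 0 with hrdef
  set Z : (Fin m → ℕ) → Multiset (Finset S) :=
    fun ω => ∑ K ∈ Finset.univ.filter (fun K : Finset S => K.Nonempty),
      Multiset.replicate (ω (e K)) K with hZ
  have hrval : ∀ K : Finset S, K.Nonempty → ((r (e K) : ℝ≥0) : ℝ) = ν K := by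
    intro K hK
    simp only [hrdef, Equiv.symm_apply_apply, if_pos hK]
    exact Real.coe_toNNReal _ (hnonneg K hK)
  -- counting identity
  have hcount : ∀ (𝒜 : Set (Finset S)) (ω : Fin m → ℕ),
      (Z ω).countP (· ∈ 𝒜)
        = ∑ j ∈ (Finset.univ.filter (fun K => K ∈ 𝒜 ∧ K.Nonempty)).image e, ω j := by
    intro 𝒜 ω
    rw [hZ]
    rw [Stmt16Aux.countP_finset_sum]
    rw [Finset.sum_congr rfl (fun K _ => Stmt16Aux.countP_replicate _ _ _)]
    rw [← Finset.sum_filter, Finset.filter_filter]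
    rw [Finset.sum_image (fun a _ b _ h => e.injective h)]
    refine Finset.sum_congr ?_ fun _ _ => rfl
    ext K
    simp [and_comm]
  -- rate sums
  have hrsum : ∀ (𝒜 : Set (Finset S)),
      ((∑ j ∈ (Finset.univ.filter (fun K => K ∈ 𝒜 ∧ K.Nonempty)).image e, r j : ℝ≥0) : ℝ)
        = ∑ K ∈ Finset.univ.filter (fun K => K ∈ 𝒜 ∧ K.Nonempty), ν K := by
    intro 𝒜
    rw [Finset.sum_image (fun a _ b _ h => e.injective h), NNReal.coe_sum]
    refine Finset.sum_congr rfl fun K hK => ?_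
    exact hrval K (Finset.mem_filter.mp hK).2.2
  -- the Poisson-count statement
  have hbul2 : ∀ (𝒜 : Set (Finset S)) (n : ℕ),
      Stmt16Aux.pm r {ω | (Z ω).countP (· ∈ 𝒜) = n}
        = ENNReal.ofReal
            (Real.exp (-(∑ K ∈ Finset.univ.filter (fun K => K ∈ 𝒜 ∧ K.Nonempty), ν K))
              * (∑ K ∈ Finset.univ.filter (fun K => K ∈ 𝒜 ∧ K.Nonempty), ν K) ^ n
              / n.factorial) := by
    intro 𝒜 n
    have hset : {ω : Fin m → ℕ | (Z ω).countP (· ∈ 𝒜) = n}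
        = {ω | ∑ j ∈ (Finset.univ.filter (fun K => K ∈ 𝒜 ∧ K.Nonempty)).image e, ω j = n} := by
      ext ω; rw [Set.mem_setOf_eq, Set.mem_setOf_eq, hcount 𝒜 ω]
    rw [hset, Stmt16Aux.pm_count]
    unfold ProbabilityTheory.poissonPMFReal
    rw [hrsum 𝒜]
  refine ⟨(Fin m → ℕ), inferInstance, Stmt16Aux.pm r, inferInstance, Z, ?_, hbul2, ?_, ?_⟩
  · -- members of Z are nonempty
    intro ω B hB
    rw [hZ] at hB
    obtain ⟨K, hK, hBK⟩ := Multiset.mem_sum.mp hB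
    rw [Multiset.eq_of_mem_replicate hBK]
    exact (Finset.mem_filter.mp hK).2
  · -- independence
    intro 𝒜 ℬ hAB n n'
    have hsetA : {ω : Fin m → ℕ | (Z ω).countP (· ∈ 𝒜) = n}
        = {ω | ∑ j ∈ (Finset.univ.filter (fun K => K ∈ 𝒜 ∧ K.Nonempty)).image e, ω j = n} := by
      ext ω; rw [Set.mem_setOf_eq, Set.mem_setOf_eq, hcount 𝒜 ω]
    have hsetB : {ω : Fin m → ℕ | (Z ω).countP (· ∈ ℬ) = n'}
        = {ω | ∑ j ∈ (Finset.univ.filter (fun K => K ∈ ℬ ∧ K.Nonempty)).image e, ω j = n'} := by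
      ext ω; rw [Set.mem_setOf_eq, Set.mem_setOf_eq, hcount ℬ ω]
    rw [hsetA, hsetB]
    refine Stmt16Aux.pm_count_inter r ?_ n n'
    rw [Finset.disjoint_image e.injective]
    refine Finset.disjoint_left.mpr fun K hKA hKB => ?_
    exact Set.disjoint_left.mp hAB (Finset.mem_filter.mp hKA).2.1
      (Finset.mem_filter.mp hKB).2.1
  · -- void probabilities
    intro I
    obtain ⟨𝒜I, h𝒜I⟩ : ∃ 𝒜 : Set (Finset S), 𝒜 = {B | ∃ i ∈ I, i ∈ B} := ⟨_, rfl⟩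
    have hset : {ω : Fin m → ℕ | ∀ i ∈ I, (decide (∃ B ∈ Z ω, i ∈ B)) = false}
        = {ω | ∑ j ∈ (Finset.univ.filter (fun K => K ∈ 𝒜I ∧ K.Nonempty)).image e, ω j = 0} := by
      ext ω
      rw [Set.mem_setOf_eq, Set.mem_setOf_eq, ← hcount 𝒜I ω, Multiset.countP_eq_zero]
      constructor
      · intro h B hB hBA
        simp only [h𝒜I, Set.mem_setOf_eq] at hBA
        obtain ⟨i, hiI, hiB⟩ := hBA
        have h2 := h i hiI
        rw [decide_eq_false_iff_not] at h2
        exact h2 ⟨B, hB, hiB⟩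
      · intro h i hiI
        rw [decide_eq_false_iff_not]
        rintro ⟨B, hB, hiB⟩
        exact h B hB (by rw [h𝒜I]; exact ⟨i, hiI, hiB⟩)
    rw [hset, Stmt16Aux.pm_count]
    unfold ProbabilityTheory.poissonPMFReal
    rw [hrsum 𝒜I]
    have hfilter : Finset.univ.filter (fun K => K ∈ 𝒜I ∧ K.Nonempty)
        = Finset.univ.filter (fun K => ¬ K ⊆ Iᶜ) := by
      ext K
      simp only [Finset.mem_filter, Finset.mem_univ, true_and, h𝒜I, Set.mem_setOf_eq,
        Finset.not_subset]
      constructor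
      · rintro ⟨⟨i, hiI, hiK⟩, -⟩
        exact ⟨i, hiK, fun hc => (Finset.mem_compl.mp hc) hiI⟩
      · rintro ⟨i, hiK, hic⟩
        have hiI : i ∈ I := by
          by_contra h
          exact hic (Finset.mem_compl.mpr h)
        exact ⟨⟨i, hiI, hiK⟩, ⟨i, hiK⟩⟩
    have hsum0 : ∑ K ∈ Finset.univ.filter (fun K => K ∈ 𝒜I ∧ K.Nonempty), ν K
        = - Real.log (P0 I) := by
      rw [hfilter]
      have hsplit := Finset.sum_filter_add_sum_filter_not Finset.univ
        (fun K : Finset S => K ⊆ Iᶜ) ν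
      have h1 : Finset.univ.filter (fun K : Finset S => K ⊆ Iᶜ) = Iᶜ.powerset := by
        ext K; simp [Finset.mem_powerset]
      have h2 : ∑ K ∈ (Finset.univ : Finset (Finset S)), ν K = 0 := by
        have := hmob Finset.univ
        rw [Finset.powerset_univ] at this
        rw [this]
        simp [hP0empty]
      have h3 : ∑ K ∈ Iᶜ.powerset, ν K = Real.log (P0 I) := by
        rw [hmob Iᶜ, compl_compl]
      rw [h1, h3] at hsplit
      linarith [hsplit, h2]
    rw [hsum0]
    simp only [pow_zero, Nat.factorial_zero, Nat.cast_one, mul_one, div_one, neg_neg]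
    rw [Real.exp_log (hpos I)]
end

section
/- Let X be the tree-indexed Markov chain with parameters (r,p) on the depth-2 spider T consisting of root o, children v_{j,1} and grandchildren v_{j,2} for j = 1,…,m (m ≥ 3), with per-edge resampling probabilities p_{j,1} on edge (o,v_{j,1}) and p_{j,2} on edge (v_{j,1},v_{j,2}), and all vertex parameters equal to r. Let S = {o, v_{1,1}, …, v_{m,1}} and let ν be the corresponding signed measure. Then the partial derivative of ν(S) with respect to r_o (the root's parameter), evaluated at all vertex parameters equal to 1, equals −∏_{j=1}^m (1−p_{j,1}) p_{j,2}. -/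
open Finset
open scoped Classical

private lemma stmt19_sum_prod_fn {m : ℕ} (g : Fin m → Bool × Bool → ℝ) :
    ∑ f : Fin m → Bool × Bool, ∏ j, g j (f j) = ∏ j, ∑ y : Bool × Bool, g j y := by
  rw [← Fintype.piFinset_univ]
  exact (Finset.prod_univ_sum _ _).symm

private lemma stmt19_key (m : ℕ) (p1 p2 : Fin m → ℝ)
    (wgt : ℝ → Bool × (Fin m → Bool × Bool) → ℝ)
    (hwgt : ∀ (s : ℝ) (x : Bool × (Fin m → Bool × Bool)),
      wgt s x = (if x.1 = false then s else 1 - s)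
        * ∏ j : Fin m,
            (((if (x.2 j).1 = x.1 then 1 - p1 j else 0)
                + p1 j * (if (x.2 j).1 = false then (1 : ℝ) else 0))
              * ((if (x.2 j).2 = (x.2 j).1 then 1 - p2 j else 0)
                + p2 j * (if (x.2 j).2 = false then (1 : ℝ) else 0))))
    (P : ℝ → Finset (Fin m) → ℝ)
    (hP : ∀ (s : ℝ) (J : Finset (Fin m)),
      P s J = ∑ x : Bool × (Fin m → Bool × Bool),
        (if (∀ j ∈ J, (x.2 j).1 = false) ∧ (∀ j ∉ J, (x.2 j).2 = false)
          then (1 : ℝ) else 0) * wgt s x)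
    (s : ℝ) (J : Finset (Fin m)) :
    P s J = s + (1 - s) * ∏ j, (if j ∈ J then p1 j else p1 j + (1 - p1 j) * p2 j) := by
  have hind : ∀ f : Fin m → Bool × Bool,
      (if (∀ j ∈ J, (f j).1 = false) ∧ (∀ j ∉ J, (f j).2 = false) then (1:ℝ) else 0)
        = ∏ j, (if ((j ∈ J → (f j).1 = false) ∧ (j ∉ J → (f j).2 = false)) then (1:ℝ) else 0) := by
    intro f
    rw [Finset.prod_boole]
    congr 1
    simp only [Finset.mem_univ, true_implies, eq_iff_iff]
    constructor
    · rintro ⟨h1, h2⟩ j; exact ⟨fun hj => h1 j hj, fun hj => h2 j hj⟩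
    · intro h; exact ⟨fun j hj => (h j).1 hj, fun j hj => (h j).2 hj⟩
  rw [hP, Fintype.sum_prod_type]
  have hstep : ∀ x₀ : Bool,
      (∑ f : Fin m → Bool × Bool,
        (if (∀ j ∈ J, (f j).1 = false) ∧ (∀ j ∉ J, (f j).2 = false) then (1:ℝ) else 0)
          * wgt s (x₀, f))
      = (if x₀ = false then s else 1 - s) *
          ∏ j, ∑ y : Bool × Bool,
            (if ((j ∈ J → y.1 = false) ∧ (j ∉ J → y.2 = false)) then (1:ℝ) else 0)
            * (((if y.1 = x₀ then 1 - p1 j else 0) + p1 j * (if y.1 = false then (1:ℝ) else 0))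
              * ((if y.2 = y.1 then 1 - p2 j else 0) + p2 j * (if y.2 = false then (1:ℝ) else 0))) := by
    intro x₀
    rw [← stmt19_sum_prod_fn, Finset.mul_sum]
    refine Finset.sum_congr rfl fun f _ => ?_
    rw [hwgt, hind]
    conv_rhs => rw [Finset.prod_mul_distrib]
    ring
  simp only [hstep]
  rw [Fintype.sum_bool]
  have htrue : ∀ j : Fin m,
      (∑ y : Bool × Bool, (if ((j ∈ J → y.1 = false) ∧ (j ∉ J → y.2 = false)) then (1:ℝ) else 0)
          * (((if y.1 = true then 1 - p1 j else 0) + p1 j * (if y.1 = false then (1:ℝ) else 0))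
            * ((if y.2 = y.1 then 1 - p2 j else 0) + p2 j * (if y.2 = false then (1:ℝ) else 0))))
        = if j ∈ J then p1 j else p1 j + (1 - p1 j) * p2 j := by
    intro j
    rw [Fintype.sum_prod_type]
    by_cases hj : j ∈ J <;> simp [Fintype.sum_bool, hj] <;> ring
  have hfalse : ∀ j : Fin m,
      (∑ y : Bool × Bool, (if ((j ∈ J → y.1 = false) ∧ (j ∉ J → y.2 = false)) then (1:ℝ) else 0)
          * (((if y.1 = false then 1 - p1 j else 0) + p1 j * (if y.1 = false then (1:ℝ) else 0))
            * ((if y.2 = y.1 then 1 - p2 j else 0) + p2 j * (if y.2 = false then (1:ℝ) else 0))))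
        = 1 := by
    intro j
    rw [Fintype.sum_prod_type]
    by_cases hj : j ∈ J <;> simp [Fintype.sum_bool, hj] <;> ring
  rw [Finset.prod_congr rfl (fun j _ => htrue j), Finset.prod_congr rfl (fun j _ => hfalse j),
    Finset.prod_const_one]
  norm_num
  ring


/-- on the depth-2 spider with `m ≥ 3` arms (root `o`, children
`v_{j,1}`, grandchildren `v_{j,2}`), with edge resampling probabilities
`p₁ j = p_{j,1}` and `p₂ j = p_{j,2}` and all vertex refresh parameters equal to `1`
except the root's, which is `s`, consider
`ν(S)(s) = Σ_{J ⊆ B⁻(S)} (−1)^{|J|} log P_s(X(J ∪ (B⁺(S)∖∂_S J)) ≡ 0)` for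
`S = {o, v_{1,1}, …, v_{m,1}}`. Then `d/ds ν(S)(s) |_{s=1} = −∏_j (1−p_{j,1}) p_{j,2}`.
A configuration is `(x₀, x)` with `x j = (value at v_{j,1}, value at v_{j,2})`. -/
theorem stmt19 (m : ℕ) (hm : 3 ≤ m)
    (p1 p2 : Fin m → ℝ)
    (hp1 : ∀ j, p1 j ∈ Set.Ioo (0 : ℝ) 1) (hp2 : ∀ j, p2 j ∈ Set.Ioo (0 : ℝ) 1)
    -- the weight of a configuration, as a function of the root parameter `s`,
    -- with all other vertex refresh parameters equal to 1
    (wgt : ℝ → Bool × (Fin m → Bool × Bool) → ℝ)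
    (hwgt : ∀ (s : ℝ) (x : Bool × (Fin m → Bool × Bool)),
      wgt s x = (if x.1 = false then s else 1 - s)
        * ∏ j : Fin m,
            (((if (x.2 j).1 = x.1 then 1 - p1 j else 0)
                + p1 j * (if (x.2 j).1 = false then (1 : ℝ) else 0))
              * ((if (x.2 j).2 = (x.2 j).1 then 1 - p2 j else 0)
                + p2 j * (if (x.2 j).2 = false then (1 : ℝ) else 0))))
    -- the void probability of the event {X ≡ 0 on J ∪ (B⁺(S) ∖ ∂_S J)}
    (P : ℝ → Finset (Fin m) → ℝ)
    (hP : ∀ (s : ℝ) (J : Finset (Fin m)),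
      P s J = ∑ x : Bool × (Fin m → Bool × Bool),
        (if (∀ j ∈ J, (x.2 j).1 = false) ∧ (∀ j ∉ J, (x.2 j).2 = false)
          then (1 : ℝ) else 0) * wgt s x)
    -- ν(S) as a function of the root parameter
    (F : ℝ → ℝ)
    (hF : ∀ s : ℝ,
      F s = ∑ J ∈ (Finset.univ : Finset (Fin m)).powerset,
        (-1 : ℝ) ^ J.card * Real.log (P s J)) :
    deriv F 1 = -∏ j : Fin m, (1 - p1 j) * p2 j := by
  set C : Finset (Fin m) → ℝ :=
    fun J => ∏ j, (if j ∈ J then p1 j else p1 j + (1 - p1 j) * p2 j) with hC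
  have hFeq : F = fun s => ∑ J ∈ (Finset.univ : Finset (Fin m)).powerset,
      (-1 : ℝ) ^ J.card * Real.log (s + (1 - s) * C J) := by
    funext s
    rw [hF]
    exact Finset.sum_congr rfl fun J _ => by
      rw [stmt19_key m p1 p2 wgt hwgt P hP s J]
  have hderiv : HasDerivAt F
      (∑ J ∈ (Finset.univ : Finset (Fin m)).powerset, (-1 : ℝ) ^ J.card * (1 - C J)) 1 := by
    rw [hFeq]
    apply HasDerivAt.fun_sum
    intro J _
    have h1 : HasDerivAt (fun s : ℝ => s + (1 - s) * C J) (1 - C J) 1 := by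
      have := (hasDerivAt_id (1:ℝ)).add
        (((hasDerivAt_const (1:ℝ) (1:ℝ)).sub (hasDerivAt_id (1:ℝ))).mul_const (C J))
      exact this.congr_deriv (by ring)
    have h2 := h1.log (by norm_num)
    have h3 := h2.const_mul ((-1 : ℝ) ^ J.card)
    exact h3.congr_deriv (by norm_num)
  rw [hderiv.deriv]
  have h0 : (∑ J ∈ (Finset.univ : Finset (Fin m)).powerset, (-1:ℝ) ^ J.card) = 0 := by
    have hne : (Finset.univ : Finset (Fin m)).Nonempty :=
      ⟨⟨0, by omega⟩, Finset.mem_univ _⟩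
    have := Finset.sum_powerset_neg_one_pow_card_of_nonempty hne
    exact_mod_cast this
  have hprod : (∑ J ∈ (Finset.univ : Finset (Fin m)).powerset, (-1:ℝ) ^ J.card * C J)
      = ∏ j, (1 - p1 j) * p2 j := by
    have hb : (∏ j : Fin m, (1 - p1 j) * p2 j)
        = ∏ j : Fin m, (-(p1 j) + (p1 j + (1 - p1 j) * p2 j)) := by
      apply Finset.prod_congr rfl; intros; ring
    rw [hb, Finset.prod_add]
    refine Finset.sum_congr rfl fun J hJ => ?_
    have hn : (∏ j ∈ J, -(p1 j)) = (-1 : ℝ) ^ J.card * ∏ j ∈ J, p1 j := by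
      rw [← Finset.prod_const (-1 : ℝ), ← Finset.prod_mul_distrib]
      exact Finset.prod_congr rfl fun j _ => by ring
    rw [hn, mul_assoc]
    congr 1
    show (∏ j : Fin m, if j ∈ J then p1 j else p1 j + (1 - p1 j) * p2 j)
      = (∏ j ∈ J, p1 j) * ∏ i ∈ univ \ J, (p1 i + (1 - p1 i) * p2 i)
    rw [Finset.prod_ite]
    congr 1
    · exact Finset.prod_congr (by simp [Finset.filter_mem_eq_inter]) fun _ _ => rfl
    · exact Finset.prod_congr (by rw [Finset.sdiff_eq_filter]) fun _ _ => rfl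
  rw [Finset.sum_congr rfl (fun J _ => by ring :
    ∀ J ∈ (Finset.univ : Finset (Fin m)).powerset,
      (-1:ℝ) ^ J.card * (1 - C J) = (-1:ℝ) ^ J.card - (-1:ℝ) ^ J.card * C J),
    Finset.sum_sub_distrib, h0, hprod]
  ring
end
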